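/- For z = μ/2 + κe^{iα} with 0 < κ < μ and ε < α < π − ε (where 0 < ε < π/2), one has Re(2iz/(4z²−μ²)) = (sin α)/(4κ) · (1 + κ²/(κ² + 2μκ cos α + μ²)), and in particular Re(2iz/(4z²−μ²)) ≥ (sin ε)/(4κ). -/

import Mathlib

open Complex Real

theorem stmt_1 (μ κ ε α : ℝ) (hμ : 0 < μ) (hκ0 : 0 < κ) (hκμ : κ < μ)
    (hε0 : 0 < ε) (hε : ε < π / 2) (hα1 : ε < α) (hα2 : α < π - ε)
    (z : ℂ) (hz : z = (μ : ℂ) / 2 + (κ : ℂ) * Complex.exp (Complex.I * α)) :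
    ((2 * Complex.I * z) / (4 * z ^ 2 - (μ : ℂ) ^ 2)).re =
      Real.sin α / (4 * κ) * (1 + κ ^ 2 / (κ ^ 2 + 2 * μ * κ * Real.cos α + μ ^ 2)) ∧
    ((2 * Complex.I * z) / (4 * z ^ 2 - (μ : ℂ) ^ 2)).re ≥ Real.sin ε / (4 * κ) := by
  have hc1 : (-1:ℝ) ≤ Real.cos α := Real.neg_one_le_cos α
  have hcs : Real.sin α ^ 2 + Real.cos α ^ 2 = 1 := Real.sin_sq_add_cos_sq α
  have hT : 0 < κ^2 + 2*μ*κ*Real.cos α + μ^2 := by nlinarith [sq_nonneg (μ - κ), mul_pos hμ hκ0]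
  have key : ((2 * Complex.I * z) / (4 * z ^ 2 - (μ : ℂ) ^ 2)).re =
      Real.sin α / (4 * κ) * (1 + κ ^ 2 / (κ ^ 2 + 2 * μ * κ * Real.cos α + μ ^ 2)) := by
    have hz' : z = Complex.ofReal (μ/2 + κ*Real.cos α) + Complex.ofReal (κ*Real.sin α) * Complex.I := by
      rw [hz, mul_comm Complex.I, Complex.exp_mul_I, ← Complex.ofReal_cos, ← Complex.ofReal_sin]
      push_cast
      ring
    have hns : Complex.normSq (4*z^2 - (μ:ℂ)^2) = 16*κ^2*(κ^2 + 2*μ*κ*Real.cos α + μ^2) := by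
      rw [hz']
      simp [Complex.normSq_apply, pow_two, Complex.mul_re, Complex.mul_im,
        Complex.cos_ofReal_re, Complex.sin_ofReal_re]
      ring_nf
      linear_combination (32*μ*κ^3*Real.cos α + 16*μ^2*κ^2 + 16*κ^4*(Real.sin α^2 + Real.cos α^2 + 1)) * hcs
    rw [Complex.div_re, hns, hz']
    simp [pow_two, Complex.mul_re, Complex.mul_im, Complex.cos_ofReal_re, Complex.sin_ofReal_re]
    have hT' : 0 < κ * κ + 2 * μ * κ * Real.cos α + μ * μ := by nlinarith [hT]
    have hT2 : κ * κ + 2 * μ * κ * Real.cos α + μ * μ ≠ 0 := hT'.ne'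
    rw [← add_div, div_eq_iff (mul_pos (by positivity : (0:ℝ) < 16 * (κ * κ)) hT').ne']
    have expand : Real.sin α / (4 * κ) * (1 + κ * κ / (κ * κ + 2 * μ * κ * Real.cos α + μ * μ)) *
        (16 * (κ * κ) * (κ * κ + 2 * μ * κ * Real.cos α + μ * μ)) =
        4*κ*Real.sin α*(μ^2+2*μ*κ*Real.cos α+2*κ^2) := by
      generalize hD : κ * κ + 2 * μ * κ * Real.cos α + μ * μ = D at hT2 ⊢
      field_simp
      subst hD
      ring
    rw [expand]
    linear_combination (8*κ^3*Real.sin α) * hcs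
  refine ⟨key, ?_⟩
  have hπ : 0 < π := Real.pi_pos
  have hsε : 0 < Real.sin ε := Real.sin_pos_of_pos_of_lt_pi hε0 (by linarith)
  have hsin : Real.sin ε ≤ Real.sin α := by
    rcases le_or_gt α (π/2) with h | h
    · exact (Real.strictMonoOn_sin ⟨by linarith, by linarith⟩ ⟨by linarith, h⟩ hα1).le
    · rw [← Real.sin_pi_sub α]
      exact (Real.strictMonoOn_sin ⟨by linarith, by linarith⟩ ⟨by linarith, by linarith⟩ (by linarith)).le
  have hsα : 0 < Real.sin α := lt_of_lt_of_le hsε hsin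
  rw [key]
  have h1 : Real.sin ε / (4 * κ) ≤ Real.sin α / (4 * κ) := by gcongr
  have h2 : Real.sin α / (4 * κ) ≤ Real.sin α / (4 * κ) * (1 + κ ^ 2 / (κ ^ 2 + 2 * μ * κ * Real.cos α + μ ^ 2)) := by
    have : (0:ℝ) ≤ κ ^ 2 / (κ ^ 2 + 2 * μ * κ * Real.cos α + μ ^ 2) := by positivity
    nlinarith [div_pos hsα (by positivity : (0:ℝ) < 4*κ)]
  linarith
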